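/- For any two labeled graphs G and H, the combined lower bound CLB(G,H) = LLB(G,H) + DLB(G,H) is at most the graph edit distance: CLB(G,H) ≤ GED(G,H). -/

import Mathlib

open scoped Classical

/-- A labeled graph: finite vertex set (of natural-number names), finite loop-free edge set,
vertex and edge labeling functions. -/
structure LGraph (Lv Le : Type) where
  verts : Finset ℕ
  edges : Finset (Sym2 ℕ)
  vl : ℕ → Lv
  el : Sym2 ℕ → Le

namespace LGraph

variable {Lv Le : Type}

/-- Well-formedness: edges are loop-free and their endpoints are vertices. -/
def WF (G : LGraph Lv Le) : Prop :=
  (∀ e ∈ G.edges, ¬ e.IsDiag) ∧ ∀ e ∈ G.edges, ∀ v ∈ e, v ∈ G.verts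

/-- The degree of a vertex: the number of incident edges. -/
noncomputable def degree (G : LGraph Lv Le) (v : ℕ) : ℕ :=
  (G.edges.filter fun e => v ∈ e).card

/-- Edit operations: insert/delete/relabel a vertex, insert/delete/relabel an edge. -/
inductive Op (Lv Le : Type) where
  | addV (v : ℕ) (l : Lv)
  | delV (v : ℕ)
  | relV (v : ℕ) (l : Lv)
  | addE (u v : ℕ) (l : Le)
  | delE (e : Sym2 ℕ)
  | relE (e : Sym2 ℕ) (l : Le)

/-- Applying an edit operation to a graph; `none` if the operation is invalid
(e.g. deleting a non-isolated vertex). -/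
noncomputable def apply (o : Op Lv Le) (G : LGraph Lv Le) : Option (LGraph Lv Le) :=
  match o with
  | .addV v l => if v ∈ G.verts then none else
      some ⟨insert v G.verts, G.edges, Function.update G.vl v l, G.el⟩
  | .delV v => if v ∈ G.verts ∧ ∀ e ∈ G.edges, v ∉ e then
      some ⟨G.verts.erase v, G.edges, G.vl, G.el⟩ else none
  | .relV v l => if v ∈ G.verts then
      some ⟨G.verts, G.edges, Function.update G.vl v l, G.el⟩ else none
  | .addE u v l => if u ∈ G.verts ∧ v ∈ G.verts ∧ u ≠ v ∧ s(u, v) ∉ G.edges then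
      some ⟨G.verts, insert s(u, v) G.edges, G.vl, Function.update G.el s(u, v) l⟩ else none
  | .delE e => if e ∈ G.edges then
      some ⟨G.verts, G.edges.erase e, G.vl, G.el⟩ else none
  | .relE e l => if e ∈ G.edges then
      some ⟨G.verts, G.edges, G.vl, Function.update G.el e l⟩ else none

/-- Applying a sequence of edit operations (an edit path). -/
noncomputable def applyList : List (Op Lv Le) → LGraph Lv Le → Option (LGraph Lv Le)
  | [], G => some G
  | o :: os, G => (apply o G).bind (applyList os)

/-- Cost of a single edit operation, with vertex insertion/deletion cost `cv`, vertex
relabeling cost `cvl`, edge insertion/deletion cost `ce` and edge relabeling cost `cel`. -/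
def opCost (cv cvl ce cel : ℝ) : Op Lv Le → ℝ
  | .addV _ _ => cv
  | .delV _ => cv
  | .relV _ _ => cvl
  | .addE _ _ _ => ce
  | .delE _ => ce
  | .relE _ _ => cel

/-- Graph isomorphism: a bijection of the vertex sets preserving labels, adjacency and
edge labels. -/
def Iso (G H : LGraph Lv Le) : Prop :=
  ∃ f : ℕ → ℕ, Set.BijOn f ↑G.verts ↑H.verts ∧
    (∀ v ∈ G.verts, H.vl (f v) = G.vl v) ∧
    (∀ u ∈ G.verts, ∀ v ∈ G.verts, (s(u, v) ∈ G.edges ↔ s(f u, f v) ∈ H.edges)) ∧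
    (∀ u ∈ G.verts, ∀ v ∈ G.verts, s(u, v) ∈ G.edges → H.el s(f u, f v) = G.el s(u, v))

/-- The graph edit distance: the infimum of the total cost over all edit paths
transforming `G` into a graph isomorphic to `H`. -/
noncomputable def GED (cv cvl ce cel : ℝ) (G H : LGraph Lv Le) : ℝ :=
  sInf {r | ∃ (ops : List (Op Lv Le)) (H' : LGraph Lv Le),
    applyList ops G = some H' ∧ Iso H' H ∧ r = (ops.map (opCost cv cvl ce cel)).sum}

/-- The vertex set of `G` padded with one dummy vertex (`Sum.inr`) for every vertex
of `H`, so that the padded vertex sets of `G` and `H` have equal cardinality. -/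
abbrev PadV (G H : LGraph Lv Le) : Type := {x // x ∈ G.verts} ⊕ {x // x ∈ H.verts}

/-- Ground cost `c_llb`: 0 for equal labels or two dummies, `cvl` for distinct labels,
`cv` for matching a vertex with a dummy. -/
noncomputable def cllb (cv cvl : ℝ) (G H : LGraph Lv Le) : PadV G H → PadV H G → ℝ
  | .inl u, .inl v => if G.vl u.1 = H.vl v.1 then 0 else cvl
  | .inl _, .inr _ => cv
  | .inr _, .inl _ => cv
  | .inr _, .inr _ => 0

/-- Degree of a padded vertex; dummies have degree 0. -/
noncomputable def padDeg (G H : LGraph Lv Le) : PadV G H → ℕ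
  | .inl u => G.degree u.1
  | .inr _ => 0

/-- Ground cost `c_dlb(u,v) = (ce/2)·|δ(u) − δ(v)|`. -/
noncomputable def cdlb (ce : ℝ) (G H : LGraph Lv Le) (x : PadV G H) (y : PadV H G) : ℝ :=
  ce / 2 * |(padDeg G H x : ℝ) - (padDeg H G y : ℝ)|

/-- Optimal assignment cost between the padded vertex sets of `G` and `H` under a ground
cost `c`: the minimum over all bijections `f` of `∑ x, c x (f x)`. -/
noncomputable def oaCost (G H : LGraph Lv Le) (c : PadV G H → PadV H G → ℝ) : ℝ :=
  sInf {r | ∃ f : PadV G H ≃ PadV H G, r = ∑ x, c x (f x)}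

/-- The label lower bound. -/
noncomputable def LLB (cv cvl : ℝ) (G H : LGraph Lv Le) : ℝ :=
  oaCost G H (cllb cv cvl G H)

/-- The degree lower bound. -/
noncomputable def DLB (ce : ℝ) (G H : LGraph Lv Le) : ℝ :=
  oaCost G H (cdlb ce G H)

/-- The combined lower bound `CLB = LLB + DLB`. -/
noncomputable def CLB (cv cvl ce : ℝ) (G H : LGraph Lv Le) : ℝ :=
  LLB cv cvl G H + DLB ce G H

end LGraph

namespace LGraph

variable {Lv Le : Type}

/-! ### Basic infrastructure -/

lemma applyList_append (l₁ l₂ : List (Op Lv Le)) (G : LGraph Lv Le) :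
    applyList (l₁ ++ l₂) G = (applyList l₁ G).bind (applyList l₂) := by
  induction l₁ generalizing G with
  | nil => rfl
  | cons o l ih =>
    show (apply o G).bind (applyList (l ++ l₂)) = ((apply o G).bind (applyList l)).bind _
    cases apply o G with
    | none => rfl
    | some G' => simp [ih]

lemma WF.apply {G G₁ : LGraph Lv Le} {o : Op Lv Le} (hG : G.WF) (h : LGraph.apply o G = some G₁) :
    G₁.WF := by
  obtain ⟨hd, hm⟩ := hG
  cases o with
  | addV v l =>
    simp only [LGraph.apply] at h
    split_ifs at h with hc
    injection h with h; subst h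
    exact ⟨hd, fun e he w hw => Finset.mem_insert_of_mem (hm e he w hw)⟩
  | delV v =>
    simp only [LGraph.apply] at h
    split_ifs at h with hc
    injection h with h; subst h
    refine ⟨hd, fun e he w hw => Finset.mem_erase.2 ⟨?_, hm e he w hw⟩⟩
    rintro rfl; exact hc.2 e he hw
  | relV v l =>
    simp only [LGraph.apply] at h
    split_ifs at h with hc
    injection h with h; subst h
    exact ⟨hd, hm⟩
  | addE u v l =>
    simp only [LGraph.apply] at h
    split_ifs at h with hc
    injection h with h; subst h
    constructor
    · intro e he
      rcases Finset.mem_insert.1 he with rfl | he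
      · rw [Sym2.mk_isDiag_iff]; exact hc.2.2.1
      · exact hd e he
    · intro e he w hw
      rcases Finset.mem_insert.1 he with rfl | he
      · rcases Sym2.mem_iff.1 hw with rfl | rfl
        · exact hc.1
        · exact hc.2.1
      · exact hm e he w hw
  | delE e =>
    simp only [LGraph.apply] at h
    split_ifs at h with hc
    injection h with h; subst h
    exact ⟨fun e' he' => hd e' (Finset.mem_of_mem_erase he'),
      fun e' he' => hm e' (Finset.mem_of_mem_erase he')⟩
  | relE e l =>
    simp only [LGraph.apply] at h
    split_ifs at h with hc
    injection h with h; subst h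
    exact ⟨hd, hm⟩

lemma WF.applyList {G H' : LGraph Lv Le} {ops : List (Op Lv Le)} (hG : G.WF)
    (h : LGraph.applyList ops G = some H') : H'.WF := by
  induction ops generalizing G with
  | nil => injection h with h; exact h ▸ hG
  | cons o l ih =>
    simp only [LGraph.applyList] at h
    cases happ : LGraph.apply o G with
    | none => rw [happ] at h; exact absurd h (by simp)
    | some G₁ => rw [happ] at h; exact ih (hG.apply happ) h

lemma degree_eq_zero {G : LGraph Lv Le} {v : ℕ} (h : ∀ e ∈ G.edges, v ∉ e) :
    G.degree v = 0 := by
  rw [degree, Finset.card_eq_zero, Finset.filter_eq_empty_iff]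
  exact h

/-! ### Ground cost positivity -/

lemma cllb_nonneg {cv cvl : ℝ} (hcv : 0 ≤ cv) (hcvl : 0 ≤ cvl) (G H : LGraph Lv Le)
    (x : PadV G H) (y : PadV H G) : 0 ≤ cllb cv cvl G H x y := by
  rcases x with u | u <;> rcases y with w | w <;> simp only [cllb]
  · split_ifs
    · exact le_refl 0
    · exact hcvl
  · exact hcv
  · exact hcv
  · exact le_refl 0

lemma cdlb_nonneg {ce : ℝ} (hce : 0 ≤ ce) (G H : LGraph Lv Le)
    (x : PadV G H) (y : PadV H G) : 0 ≤ cdlb ce G H x y :=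
  mul_nonneg (by linarith) (abs_nonneg _)

/-! ### Optimal assignment cost basics -/

lemma oaCost_le {G H : LGraph Lv Le} {c : PadV G H → PadV H G → ℝ}
    (hc : ∀ x y, 0 ≤ c x y) (f : PadV G H ≃ PadV H G) :
    oaCost G H c ≤ ∑ x, c x (f x) :=
  csInf_le ⟨0, by rintro r ⟨g, rfl⟩; exact Finset.sum_nonneg fun x _ => hc _ _⟩ ⟨f, rfl⟩

lemma oaCost_le_add {G H G' H' : LGraph Lv Le} {c : PadV G H → PadV H G → ℝ}
    {c' : PadV G' H' → PadV H' G' → ℝ} (a : ℝ) (hc : ∀ x y, 0 ≤ c x y)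
    (hstep : ∀ f' : PadV G' H' ≃ PadV H' G', ∃ f : PadV G H ≃ PadV H G,
      ∑ x, c x (f x) ≤ a + ∑ x, c' x (f' x)) :
    oaCost G H c ≤ a + oaCost G' H' c' := by
  rw [← sub_le_iff_le_add']
  show oaCost G H c - a ≤ oaCost G' H' c'
  refine le_csInf ⟨_, Equiv.sumComm _ _, rfl⟩ ?_
  rintro r ⟨f', rfl⟩
  obtain ⟨f, hf⟩ := hstep f'
  have := oaCost_le hc f
  linarith

/-! ### Sum manipulation -/

lemma sum_eq_of_eq_off {α β : Type*} [Fintype α] (c : α → β → ℝ) (f g : α → β) (s : Finset α)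
    (h : ∀ x ∉ s, g x = f x) :
    ∑ x, c x (g x) = ∑ x, c x (f x) - ∑ x ∈ s, c x (f x) + ∑ x ∈ s, c x (g x) := by
  rw [← Finset.sum_sdiff (Finset.subset_univ s) (f := fun x => c x (g x)),
    ← Finset.sum_sdiff (Finset.subset_univ s) (f := fun x => c x (f x))]
  have : ∑ x ∈ Finset.univ \ s, c x (g x) = ∑ x ∈ Finset.univ \ s, c x (f x) :=
    Finset.sum_congr rfl fun x hx => by rw [h x (Finset.mem_sdiff.1 hx).2]
  rw [this]; ring

/-! ### Option-sum equivalences -/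

def optSumL {A B : Type*} : (Option A ⊕ B) ≃ Option (A ⊕ B) where
  toFun x := match x with
    | .inl none => none
    | .inl (some a) => some (.inl a)
    | .inr b => some (.inr b)
  invFun x := match x with
    | none => .inl none
    | some (.inl a) => .inl (some a)
    | some (.inr b) => .inr b
  left_inv := by rintro ((_ | a) | b) <;> rfl
  right_inv := by rintro (_ | (a | b)) <;> rfl

def optSumR {A B : Type*} : (B ⊕ Option A) ≃ Option (B ⊕ A) where
  toFun x := match x with
    | .inr none => none
    | .inr (some a) => some (.inr a)
    | .inl b => some (.inl b)
  invFun x := match x with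
    | none => .inr none
    | some (.inr a) => .inr (some a)
    | some (.inl b) => .inl b
  left_inv := by rintro (b | (_ | a)) <;> rfl
  right_inv := by rintro (_ | (a | b)) <;> rfl

def optSumCongrL {A A' B : Type*} (e : A' ≃ Option A) : (A' ⊕ B) ≃ Option (A ⊕ B) :=
  (e.sumCongr (Equiv.refl B)).trans optSumL

def optSumCongrR {A A' B : Type*} (e : A' ≃ Option A) : (B ⊕ A') ≃ Option (B ⊕ A) :=
  ((Equiv.refl B).sumCongr e).trans optSumR

@[simp] lemma optSumCongrL_symm_none {A A' B : Type*} (e : A' ≃ Option A) :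
    (optSumCongrL (B := B) e).symm none = Sum.inl (e.symm none) := rfl

@[simp] lemma optSumCongrL_symm_some_inl {A A' B : Type*} (e : A' ≃ Option A) (a : A) :
    (optSumCongrL (B := B) e).symm (some (Sum.inl a)) = Sum.inl (e.symm (some a)) := rfl

@[simp] lemma optSumCongrL_symm_some_inr {A A' B : Type*} (e : A' ≃ Option A) (b : B) :
    (optSumCongrL (B := B) e).symm (some (Sum.inr b)) = Sum.inr b := rfl

@[simp] lemma optSumCongrR_symm_none {A A' B : Type*} (e : A' ≃ Option A) :
    (optSumCongrR (B := B) e).symm none = Sum.inr (e.symm none) := rfl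

@[simp] lemma optSumCongrR_symm_some_inr {A A' B : Type*} (e : A' ≃ Option A) (a : A) :
    (optSumCongrR (B := B) e).symm (some (Sum.inr a)) = Sum.inr (e.symm (some a)) := rfl

@[simp] lemma optSumCongrR_symm_some_inl {A A' B : Type*} (e : A' ≃ Option A) (b : B) :
    (optSumCongrR (B := B) e).symm (some (Sum.inl b)) = Sum.inl b := rfl

/-! ### Vertex set equivalences -/

def vertEquivOption {s t : Finset ℕ} {v : ℕ} (hv : v ∈ s)
    (h : ∀ x, x ∈ t ↔ x ∈ s ∧ x ≠ v) : {x // x ∈ s} ≃ Option {x // x ∈ t} where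
  toFun y := if hy : (y : ℕ) = v then none else some ⟨y.1, (h _).2 ⟨y.2, hy⟩⟩
  invFun oy := oy.elim ⟨v, hv⟩ fun z => ⟨z.1, ((h _).1 z.2).1⟩
  left_inv y := by
    by_cases hy : (y : ℕ) = v
    · simp only [hy, dif_pos, Option.elim]; exact Subtype.ext hy.symm
    · simp only [hy, dif_neg, not_false_iff, Option.elim]
  right_inv oy := by
    cases oy with
    | none => simp only [Option.elim, dif_pos]; exact dif_pos rfl
    | some z =>
      have : z.1 ≠ v := ((h _).1 z.2).2
      simp only [Option.elim, this, dif_neg, not_false_iff]; exact dif_neg this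

@[simp] lemma vertEquivOption_symm_none {s t : Finset ℕ} {v : ℕ} (hv : v ∈ s)
    (h : ∀ x, x ∈ t ↔ x ∈ s ∧ x ≠ v) : (vertEquivOption hv h).symm none = ⟨v, hv⟩ := rfl

@[simp] lemma vertEquivOption_symm_some {s t : Finset ℕ} {v : ℕ} (hv : v ∈ s)
    (h : ∀ x, x ∈ t ↔ x ∈ s ∧ x ≠ v) (z : {x // x ∈ t}) :
    (vertEquivOption hv h).symm (some z) = ⟨z.1, ((h _).1 z.2).1⟩ := rfl

/-! ### Cost of restricted and extended assignments -/

lemma restrict_cost {A A' B B' : Type*} [Fintype A] [Fintype A']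
    (eL : A' ≃ Option A) (eR : B' ≃ Option B)
    (cb : A' → B' → ℝ) (cs : A → B → ℝ)
    (hc : ∀ x y, cb (eL.symm (some x)) (eR.symm (some y)) = cs x y)
    (g : A' ≃ B') (hg : g (eL.symm none) = eR.symm none) :
    ∑ x, cs x ((Equiv.removeNone (eL.symm.trans (g.trans eR))) x)
      = ∑ z, cb z (g z) - cb (eL.symm none) (eR.symm none) := by
  set E := eL.symm.trans (g.trans eR) with hE
  have hEnone : E none = none := by
    simp only [hE, Equiv.trans_apply, hg, Equiv.apply_symm_apply]
  have hEsome : ∀ x : A, E (some x) = some (E.removeNone x) := by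
    intro x
    rcases h : E (some x) with _ | y
    · exact absurd (E.injective (h.trans hEnone.symm)) (by simp)
    · rw [Equiv.removeNone_some E ⟨y, h⟩, h]
  have key : ∑ z, cb z (g z) = ∑ oz : Option A, cb (eL.symm oz) (g (eL.symm oz)) :=
    (Equiv.sum_comp eL.symm fun z => cb z (g z)).symm
  rw [key, Fintype.sum_option]
  have h2 : ∀ x : A, cb (eL.symm (some x)) (g (eL.symm (some x))) = cs x (E.removeNone x) := by
    intro x
    have h4 : eR (g (eL.symm (some x))) = some (E.removeNone x) := hEsome x
    have h5 : g (eL.symm (some x)) = eR.symm (some (E.removeNone x)) := by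
      rw [← h4, Equiv.symm_apply_apply]
    rw [h5, hc]
  rw [hg]
  rw [Finset.sum_congr rfl fun x _ => h2 x]
  ring

lemma extend_cost {A A' B B' : Type*} [Fintype A] [Fintype A']
    (eL : A' ≃ Option A) (eR : B' ≃ Option B)
    (cb : A' → B' → ℝ) (cs : A → B → ℝ)
    (hc : ∀ x y, cb (eL.symm (some x)) (eR.symm (some y)) = cs x y)
    (f : A ≃ B) :
    ∑ z, cb z ((eL.trans (f.optionCongr.trans eR.symm)) z)
      = cb (eL.symm none) (eR.symm none) + ∑ x, cs x (f x) := by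
  have key : ∑ z, cb z ((eL.trans (f.optionCongr.trans eR.symm)) z)
      = ∑ oz : Option A, cb (eL.symm oz) ((eL.trans (f.optionCongr.trans eR.symm)) (eL.symm oz)) :=
    (Equiv.sum_comp eL.symm _).symm
  rw [key, Fintype.sum_option]
  congr 1
  · simp [Equiv.trans_apply]
  · refine Finset.sum_congr rfl fun x _ => ?_
    have : (eL.trans (f.optionCongr.trans eR.symm)) (eL.symm (some x)) = eR.symm (some (f x)) := by
      simp [Equiv.trans_apply]
    rw [this, hc]

/-! ### Counting: a dummy matched to a dummy exists -/

lemma exists_dummy_pair {A B C : Type*} [Finite A] (f : (A ⊕ B) ≃ (C ⊕ A)) {a₀ : A} {y : C}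
    (hy : f (Sum.inl a₀) = Sum.inl y) :
    ∃ (d : A) (b : B), f.symm (Sum.inr d) = Sum.inr b := by
  by_contra hcon
  push_neg at hcon
  have hL : ∀ d : A, ∃ a, f.symm (Sum.inr d) = Sum.inl a := by
    intro d
    rcases h : f.symm (Sum.inr d) with a | b
    · exact ⟨a, rfl⟩
    · exact absurd h (hcon d b)
  choose h hh using hL
  have hinj : Function.Injective h := by
    intro d₁ d₂ he
    have h1 : f.symm (Sum.inr d₁) = f.symm (Sum.inr d₂) := by rw [hh d₁, hh d₂, he]
    have := f.symm.injective h1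
    exact Sum.inr_injective this
  obtain ⟨d, hd⟩ := (Finite.injective_iff_surjective.1 hinj) a₀
  have h2 : f.symm (Sum.inr d) = Sum.inl a₀ := by rw [hh d, hd]
  have h3 : Sum.inr d = f (Sum.inl a₀) := by rw [← h2, Equiv.apply_symm_apply]
  rw [hy] at h3
  exact nomatch h3

/-! ### More helpers for the single-step bound -/

lemma sum_pointwise_le {α β : Type*} [Fintype α] [DecidableEq α] {c c' : α → β → ℝ} {f : α → β}
    (x₀ : α) (a : ℝ) (h : ∀ x, c x (f x) ≤ c' x (f x) + if x = x₀ then a else 0) :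
    ∑ x, c x (f x) ≤ a + ∑ x, c' x (f x) := by
  calc ∑ x, c x (f x) ≤ ∑ x, (c' x (f x) + if x = x₀ then a else 0) :=
        Finset.sum_le_sum fun x _ => h x
  _ = ∑ x, c' x (f x) + ∑ x : α, (if x = x₀ then a else 0) := Finset.sum_add_distrib
  _ = a + ∑ x, c' x (f x) := by
      rw [Finset.sum_ite_eq' Finset.univ x₀ (fun _ => a)]
      simp [add_comm]

lemma sum_pointwise_le₂ {α β : Type*} [Fintype α] [DecidableEq α] {c c' : α → β → ℝ} {f : α → β}
    (x₀ x₁ : α) (hne : x₀ ≠ x₁) (a : ℝ)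
    (h : ∀ x, c x (f x) ≤ c' x (f x) + ((if x = x₀ then a else 0) + if x = x₁ then a else 0)) :
    ∑ x, c x (f x) ≤ a + a + ∑ x, c' x (f x) := by
  calc ∑ x, c x (f x)
      ≤ ∑ x, (c' x (f x) + ((if x = x₀ then a else 0) + if x = x₁ then a else 0)) :=
        Finset.sum_le_sum fun x _ => h x
  _ = ∑ x, c' x (f x) + ∑ x : α, ((if x = x₀ then a else 0) + if x = x₁ then a else 0) :=
      Finset.sum_add_distrib
  _ = a + a + ∑ x, c' x (f x) := by
      rw [Finset.sum_add_distrib, Finset.sum_ite_eq' Finset.univ x₀ (fun _ => a),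
        Finset.sum_ite_eq' Finset.univ x₁ (fun _ => a)]
      simp [add_comm]

lemma card_filter_insert {α : Type*} [DecidableEq α] (s : Finset α) (a : α) (ha : a ∉ s)
    (p : α → Prop) [DecidablePred p] :
    ((insert a s).filter p).card = (s.filter p).card + if p a then 1 else 0 := by
  rw [Finset.filter_insert]
  split_ifs with h
  · exact Finset.card_insert_of_notMem fun hc => ha (Finset.mem_of_mem_filter a hc)
  · simp

lemma card_filter_erase {α : Type*} [DecidableEq α] (s : Finset α) (a : α) (ha : a ∈ s)
    (p : α → Prop) [DecidablePred p] :
    (s.filter p).card = ((s.erase a).filter p).card + if p a then 1 else 0 := by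
  rw [Finset.filter_erase]
  split_ifs with h
  · rw [Finset.card_erase_of_mem (Finset.mem_filter.2 ⟨ha, h⟩)]
    have : 0 < (s.filter p).card := Finset.card_pos.2 ⟨a, Finset.mem_filter.2 ⟨ha, h⟩⟩
    omega
  · rw [Finset.erase_eq_of_notMem fun hc => h (Finset.mem_filter.1 hc).2]
    simp

lemma cdlb_abs_le {ce : ℝ} (hce : 0 ≤ ce) (a b d : ℝ) (h : |a - b| ≤ 1) :
    ce / 2 * |a - d| ≤ ce / 2 * |b - d| + ce / 2 := by
  have h1 : |a - d| ≤ |b - d| + 1 := by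
    have h2 : a - d = (b - d) + (a - b) := by ring
    rw [h2]
    exact (abs_add_le _ _).trans (by linarith)
  have h3 := mul_le_mul_of_nonneg_left h1 (show (0:ℝ) ≤ ce / 2 by linarith)
  linarith

lemma sum_trans_swap {A B : Type*} [Fintype A] [DecidableEq A] [DecidableEq B]
    (cb : A → B → ℝ) (f₁ : A ≃ B) (p : A) (q : B) (hpq : f₁ p ≠ q) :
    ∑ z, cb z ((f₁.trans (Equiv.swap (f₁ p) q)) z)
      = ∑ z, cb z (f₁ z) - cb p (f₁ p) - cb (f₁.symm q) q + cb p q + cb (f₁.symm q) (f₁ p) := by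
  have hlp : f₁.symm q ≠ p := fun h => hpq (by rw [← h, Equiv.apply_symm_apply])
  have hoff : ∀ z ∉ ({p, f₁.symm q} : Finset A), (f₁.trans (Equiv.swap (f₁ p) q)) z = f₁ z := by
    intro z hz
    simp only [Finset.mem_insert, Finset.mem_singleton] at hz
    push_neg at hz
    simp only [Equiv.trans_apply]
    refine Equiv.swap_apply_of_ne_of_ne (fun h => hz.1 (f₁.injective h)) (fun h => hz.2 ?_)
    rw [← h, Equiv.symm_apply_apply]
  rw [sum_eq_of_eq_off cb f₁ _ _ hoff, Finset.sum_pair (Ne.symm hlp),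
    Finset.sum_pair (Ne.symm hlp)]
  simp only [Equiv.trans_apply, Equiv.swap_apply_left, Equiv.apply_symm_apply,
    Equiv.swap_apply_right]
  ring

lemma sum_trans_cycle {A B : Type*} [Fintype A] [DecidableEq A] [DecidableEq B]
    (cb : A → B → ℝ) (f₁ : A ≃ B) (p : A) (q r : B)
    (h1 : f₁ p ≠ q) (h2 : f₁ p ≠ r) (h3 : q ≠ r) :
    ∑ z, cb z ((f₁.trans ((Equiv.swap (f₁ p) r).trans (Equiv.swap r q))) z)
      = ∑ z, cb z (f₁ z) - cb p (f₁ p) - cb (f₁.symm q) q - cb (f₁.symm r) r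
        + cb p q + cb (f₁.symm q) r + cb (f₁.symm r) (f₁ p) := by
  set g := f₁.trans ((Equiv.swap (f₁ p) r).trans (Equiv.swap r q)) with hgdef
  have hq : f₁.symm q ≠ p := fun h => h1 (by rw [← h, Equiv.apply_symm_apply])
  have hr : f₁.symm r ≠ p := fun h => h2 (by rw [← h, Equiv.apply_symm_apply])
  have hqr : f₁.symm q ≠ f₁.symm r := fun h => h3 (by
    have := congrArg f₁ h; rwa [Equiv.apply_symm_apply, Equiv.apply_symm_apply] at this)
  have hoff : ∀ z ∉ ({p, f₁.symm q, f₁.symm r} : Finset A), g z = f₁ z := by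
    intro z hz
    simp only [Finset.mem_insert, Finset.mem_singleton] at hz
    push_neg at hz
    have hz1 : f₁ z ≠ f₁ p := fun h => hz.1 (f₁.injective h)
    have hz2 : f₁ z ≠ q := fun h => hz.2.1 (by rw [← h, Equiv.symm_apply_apply])
    have hz3 : f₁ z ≠ r := fun h => hz.2.2 (by rw [← h, Equiv.symm_apply_apply])
    simp only [hgdef, Equiv.trans_apply]
    rw [Equiv.swap_apply_of_ne_of_ne hz1 hz3, Equiv.swap_apply_of_ne_of_ne hz3 hz2]
  have hmem1 : p ∉ ({f₁.symm q, f₁.symm r} : Finset A) := by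
    simp only [Finset.mem_insert, Finset.mem_singleton]
    push_neg
    exact ⟨Ne.symm hq, Ne.symm hr⟩
  have hmem2 : f₁.symm q ∉ ({f₁.symm r} : Finset A) := by
    simp only [Finset.mem_singleton]; exact hqr
  have hgp : g p = q := by
    simp only [hgdef, Equiv.trans_apply, Equiv.swap_apply_left]
  have hgq : g (f₁.symm q) = r := by
    simp only [hgdef, Equiv.trans_apply, Equiv.apply_symm_apply]
    rw [Equiv.swap_apply_of_ne_of_ne (Ne.symm h1) h3, Equiv.swap_apply_right]
  have hgr : g (f₁.symm r) = f₁ p := by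
    simp only [hgdef, Equiv.trans_apply, Equiv.apply_symm_apply, Equiv.swap_apply_right]
    exact Equiv.swap_apply_of_ne_of_ne h2 h1
  rw [sum_eq_of_eq_off cb f₁ g _ hoff]
  rw [Finset.sum_insert hmem1, Finset.sum_insert hmem2, Finset.sum_singleton,
    Finset.sum_insert hmem1, Finset.sum_insert hmem2, Finset.sum_singleton]
  rw [hgp, hgq, hgr, Equiv.apply_symm_apply, Equiv.apply_symm_apply]
  ring

lemma exists_restrict_le {A A' B B' : Type*} [Fintype A] [Fintype A']
    (eL : A' ≃ Option A) (eR : B' ≃ Option B)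
    (cb : A' → B' → ℝ) (cs : A → B → ℝ)
    (hc : ∀ x y, cb (eL.symm (some x)) (eR.symm (some y)) = cs x y)
    (f₁ : A' ≃ B') (a : ℝ)
    (hex : ∃ g : A' ≃ B', g (eL.symm none) = eR.symm none ∧
      ∑ z, cb z (g z) ≤ a + cb (eL.symm none) (eR.symm none) + ∑ z, cb z (f₁ z)) :
    ∃ f : A ≃ B, ∑ x, cs x (f x) ≤ a + ∑ z, cb z (f₁ z) := by
  obtain ⟨g, hg, hcost⟩ := hex
  refine ⟨Equiv.removeNone (eL.symm.trans (g.trans eR)), ?_⟩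
  rw [restrict_cost eL eR cb cs hc g hg]
  linarith

/-! ### Ground-cost compatibility across vertex insertion/deletion -/

lemma cllb_compat {cv cvl : ℝ} {P Q H : LGraph Lv Le}
    (eV : {x // x ∈ P.verts} ≃ Option {x // x ∈ Q.verts})
    (hcoe : ∀ z : {x // x ∈ Q.verts}, ((eV.symm (some z) : {x // x ∈ P.verts}) : ℕ) = z.1)
    (hvl : ∀ z : {x // x ∈ Q.verts}, P.vl z.1 = Q.vl z.1)
    (x : PadV Q H) (y : PadV H Q) :
    cllb cv cvl P H ((optSumCongrL eV).symm (some x))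
      ((optSumCongrR (B := {x // x ∈ H.verts}) eV).symm (some y)) = cllb cv cvl Q H x y := by
  rcases x with u | u <;> rcases y with w | w <;>
    simp only [optSumCongrL_symm_some_inl, optSumCongrL_symm_some_inr,
      optSumCongrR_symm_some_inl, optSumCongrR_symm_some_inr, cllb]
  rw [hcoe u, hvl u]

lemma cdlb_compat {ce : ℝ} {P Q H : LGraph Lv Le}
    (eV : {x // x ∈ P.verts} ≃ Option {x // x ∈ Q.verts})
    (hcoe : ∀ z : {x // x ∈ Q.verts}, ((eV.symm (some z) : {x // x ∈ P.verts}) : ℕ) = z.1)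
    (hdeg : ∀ z : {x // x ∈ Q.verts}, P.degree z.1 = Q.degree z.1)
    (x : PadV Q H) (y : PadV H Q) :
    cdlb ce P H ((optSumCongrL eV).symm (some x))
      ((optSumCongrR (B := {x // x ∈ H.verts}) eV).symm (some y)) = cdlb ce Q H x y := by
  rcases x with u | u <;> rcases y with w | w <;>
    simp only [optSumCongrL_symm_some_inl, optSumCongrL_symm_some_inr,
      optSumCongrR_symm_some_inl, optSumCongrR_symm_some_inr, cdlb, padDeg]
  · rw [hcoe u, hdeg u]
  · rw [hcoe u, hdeg u]

/-! ### The one-step bound -/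

lemma clb_step (cv cvl ce cel : ℝ) (hcv : 0 ≤ cv) (hcvl : 0 ≤ cvl) (hce : 0 ≤ ce)
    (hcel : 0 ≤ cel) {G G₁ : LGraph Lv Le} (H : LGraph Lv Le) (hG : G.WF) {o : Op Lv Le}
    (h : LGraph.apply o G = some G₁) :
    CLB cv cvl ce G H ≤ opCost cv cvl ce cel o + CLB cv cvl ce G₁ H := by
  cases o with
  | relE e l =>
    simp only [LGraph.apply] at h
    split_ifs at h with hcond
    injection h with h; subst h
    set G₁ : LGraph Lv Le := ⟨G.verts, G.edges, G.vl, Function.update G.el e l⟩ with hG₁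
    have hL : LLB cv cvl G H ≤ 0 + LLB cv cvl G₁ H := by
      refine oaCost_le_add 0 (cllb_nonneg hcv hcvl G H) ?_
      intro f₁
      refine ⟨f₁, le_of_eq ?_⟩
      rw [zero_add]
      refine Finset.sum_congr rfl fun x _ => ?_
      rcases x with u | u
      · cases hfx : f₁ (Sum.inl u) with
        | inl w => rfl
        | inr w => rfl
      · cases hfx : f₁ (Sum.inr u) with
        | inl w => rfl
        | inr w => rfl
    have hD : DLB ce G H ≤ 0 + DLB ce G₁ H := by
      refine oaCost_le_add 0 (cdlb_nonneg hce G H) ?_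
      intro f₁
      refine ⟨f₁, le_of_eq ?_⟩
      rw [zero_add]
      refine Finset.sum_congr rfl fun x _ => ?_
      rcases x with u | u
      · cases hfx : f₁ (Sum.inl u) with
        | inl w => rfl
        | inr w => rfl
      · cases hfx : f₁ (Sum.inr u) with
        | inl w => rfl
        | inr w => rfl
    simp only [CLB, opCost]
    linarith
  | relV v l =>
    simp only [LGraph.apply] at h
    split_ifs at h with hcond
    injection h with h; subst h
    set G₁ : LGraph Lv Le := ⟨G.verts, G.edges, Function.update G.vl v l, G.el⟩ with hG₁
    have hD : DLB ce G H ≤ 0 + DLB ce G₁ H := by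
      refine oaCost_le_add 0 (cdlb_nonneg hce G H) ?_
      intro f₁
      refine ⟨f₁, le_of_eq ?_⟩
      rw [zero_add]
      refine Finset.sum_congr rfl fun x _ => ?_
      rcases x with u | u
      · cases hfx : f₁ (Sum.inl u) with
        | inl w => rfl
        | inr w => rfl
      · cases hfx : f₁ (Sum.inr u) with
        | inl w => rfl
        | inr w => rfl
    have hL : LLB cv cvl G H ≤ cvl + LLB cv cvl G₁ H := by
      refine oaCost_le_add cvl (cllb_nonneg hcv hcvl G H) ?_
      intro f₁
      refine ⟨f₁, sum_pointwise_le (Sum.inl ⟨v, hcond⟩) cvl ?_⟩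
      intro x
      rcases x with u | u
      · by_cases hu : (u : ℕ) = v
        · have hx : (Sum.inl u : PadV G H) = Sum.inl ⟨v, hcond⟩ := by
            congr 1; exact Subtype.ext hu
          rw [if_pos hx]
          cases hfx : f₁ (Sum.inl u) with
          | inl w => simp only [cllb]; split_ifs <;> linarith
          | inr w => simp only [cllb]; linarith
        · have heq : cllb cv cvl G H (Sum.inl u) (f₁ (Sum.inl u))
              = cllb cv cvl G₁ H (Sum.inl u) (f₁ (Sum.inl u)) := by
            cases hfx : f₁ (Sum.inl u) with
            | inl w =>
              simp only [cllb]
              show (if G.vl u.1 = H.vl w.1 then (0:ℝ) else cvl)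
                = if Function.update G.vl v l u.1 = H.vl w.1 then 0 else cvl
              rw [Function.update_of_ne hu]
            | inr w => rfl
          rw [heq]; split_ifs <;> linarith
      · have heq : cllb cv cvl G H (Sum.inr u) (f₁ (Sum.inr u))
            = cllb cv cvl G₁ H (Sum.inr u) (f₁ (Sum.inr u)) := by
          cases hfx : f₁ (Sum.inr u) with
          | inl w => rfl
          | inr w => rfl
        rw [heq]; split_ifs <;> linarith
    simp only [CLB, opCost]
    linarith
  | addE u v l =>
    simp only [LGraph.apply] at h
    split_ifs at h with hcond
    injection h with h; subst h
    obtain ⟨hu, hv, huv, hnein⟩ := hcond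
    set G₁ : LGraph Lv Le :=
      ⟨G.verts, insert s(u,v) G.edges, G.vl, Function.update G.el s(u,v) l⟩ with hG₁
    have hL : LLB cv cvl G H ≤ 0 + LLB cv cvl G₁ H := by
      refine oaCost_le_add 0 (cllb_nonneg hcv hcvl G H) ?_
      intro f₁
      refine ⟨f₁, le_of_eq ?_⟩
      rw [zero_add]
      refine Finset.sum_congr rfl fun x _ => ?_
      rcases x with w | w
      · cases hfx : f₁ (Sum.inl w) with
        | inl y => rfl
        | inr y => rfl
      · cases hfx : f₁ (Sum.inr w) with
        | inl y => rfl
        | inr y => rfl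
    have hdeg : ∀ w : ℕ, G₁.degree w = G.degree w + if w ∈ s(u,v) then 1 else 0 :=
      fun w => card_filter_insert G.edges s(u,v) hnein _
    have hx01 : (Sum.inl ⟨u, hu⟩ : PadV G H) ≠ Sum.inl ⟨v, hv⟩ := by
      intro hcon; injection hcon with hcon
      exact huv (congrArg Subtype.val hcon)
    have hD : DLB ce G H ≤ ce + DLB ce G₁ H := by
      refine oaCost_le_add ce (cdlb_nonneg hce G H) ?_
      intro f₁
      refine ⟨f₁, ?_⟩
      have key := sum_pointwise_le₂ (c := cdlb ce G H) (c' := cdlb ce G₁ H)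
        (f := ⇑f₁) (Sum.inl ⟨u, hu⟩) (Sum.inl ⟨v, hv⟩) hx01 (ce/2) ?_
      · linarith
      intro x
      rcases x with w | w
      · have hdw := hdeg w.1
        by_cases h1 : (w : ℕ) = u
        · have hx : (Sum.inl w : PadV G H) = Sum.inl ⟨u, hu⟩ := by
            congr 1; exact Subtype.ext h1
          have hx' : (Sum.inl w : PadV G H) ≠ Sum.inl ⟨v, hv⟩ := by
            intro hcon; injection hcon with hcon
            exact huv (h1 ▸ congrArg Subtype.val hcon)
          rw [if_pos hx, if_neg hx', add_zero]
          rw [if_pos (Sym2.mem_iff.2 (Or.inl h1))] at hdw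
          cases hfy : f₁ (Sum.inl w) with
          | inl y =>
            simp only [cdlb, padDeg]
            refine cdlb_abs_le hce _ _ _ ?_
            rw [hdw]; push_cast
            rw [show ((G.degree ↑w : ℝ) - ((G.degree ↑w : ℝ) + 1)) = -1 by ring, abs_neg, abs_one]
          | inr y =>
            simp only [cdlb, padDeg]
            refine cdlb_abs_le hce _ _ _ ?_
            rw [hdw]; push_cast
            rw [show ((G.degree ↑w : ℝ) - ((G.degree ↑w : ℝ) + 1)) = -1 by ring, abs_neg, abs_one]
        · by_cases h2 : (w : ℕ) = v
          · have hx : (Sum.inl w : PadV G H) = Sum.inl ⟨v, hv⟩ := by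
              congr 1; exact Subtype.ext h2
            have hx' : (Sum.inl w : PadV G H) ≠ Sum.inl ⟨u, hu⟩ := by
              intro hcon; injection hcon with hcon
              exact huv (h2 ▸ congrArg Subtype.val hcon).symm
            rw [if_pos hx, if_neg hx', zero_add]
            rw [if_pos (Sym2.mem_iff.2 (Or.inr h2))] at hdw
            cases hfy : f₁ (Sum.inl w) with
            | inl y =>
              simp only [cdlb, padDeg]
              refine cdlb_abs_le hce _ _ _ ?_
              rw [hdw]; push_cast
              rw [show ((G.degree ↑w : ℝ) - ((G.degree ↑w : ℝ) + 1)) = -1 by ring, abs_neg, abs_one]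
            | inr y =>
              simp only [cdlb, padDeg]
              refine cdlb_abs_le hce _ _ _ ?_
              rw [hdw]; push_cast
              rw [show ((G.degree ↑w : ℝ) - ((G.degree ↑w : ℝ) + 1)) = -1 by ring, abs_neg, abs_one]
          · have hnm : ¬ (w : ℕ) ∈ s(u,v) := by
              rw [Sym2.mem_iff]; push_neg; exact ⟨h1, h2⟩
            rw [if_neg hnm, add_zero] at hdw
            have heq : cdlb ce G H (Sum.inl w) (f₁ (Sum.inl w))
                = cdlb ce G₁ H (Sum.inl w) (f₁ (Sum.inl w)) := by
              cases hfy : f₁ (Sum.inl w) with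
              | inl y => simp only [cdlb, padDeg, hdw]
              | inr y => simp only [cdlb, padDeg, hdw]
            rw [heq]; split_ifs <;> linarith
      · have heq : cdlb ce G H (Sum.inr w) (f₁ (Sum.inr w))
            = cdlb ce G₁ H (Sum.inr w) (f₁ (Sum.inr w)) := by
          cases hfy : f₁ (Sum.inr w) with
          | inl y => rfl
          | inr y => rfl
        rw [heq]; split_ifs <;> linarith
    simp only [CLB, opCost]
    linarith
  | delE e =>
    revert h
    induction e using Sym2.ind with
    | _ a b =>
    intro h
    simp only [LGraph.apply] at h
    split_ifs at h with hcond
    injection h with h; subst h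
    have hab : a ≠ b := fun hcon => (hG.1 _ hcond) (Sym2.mk_isDiag_iff.2 hcon)
    have ha : a ∈ G.verts := hG.2 _ hcond a (Sym2.mem_iff.2 (Or.inl rfl))
    have hb : b ∈ G.verts := hG.2 _ hcond b (Sym2.mem_iff.2 (Or.inr rfl))
    set G₁ : LGraph Lv Le := ⟨G.verts, G.edges.erase s(a,b), G.vl, G.el⟩ with hG₁
    have hL : LLB cv cvl G H ≤ 0 + LLB cv cvl G₁ H := by
      refine oaCost_le_add 0 (cllb_nonneg hcv hcvl G H) ?_
      intro f₁
      refine ⟨f₁, le_of_eq ?_⟩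
      rw [zero_add]
      refine Finset.sum_congr rfl fun x _ => ?_
      rcases x with w | w
      · cases hfx : f₁ (Sum.inl w) with
        | inl y => rfl
        | inr y => rfl
      · cases hfx : f₁ (Sum.inr w) with
        | inl y => rfl
        | inr y => rfl
    have hdeg : ∀ w : ℕ, G.degree w = G₁.degree w + if w ∈ s(a,b) then 1 else 0 :=
      fun w => card_filter_erase G.edges s(a,b) hcond _
    have hx01 : (Sum.inl ⟨a, ha⟩ : PadV G H) ≠ Sum.inl ⟨b, hb⟩ := by
      intro hcon; injection hcon with hcon
      exact hab (congrArg Subtype.val hcon)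
    have hD : DLB ce G H ≤ ce + DLB ce G₁ H := by
      refine oaCost_le_add ce (cdlb_nonneg hce G H) ?_
      intro f₁
      refine ⟨f₁, ?_⟩
      have key := sum_pointwise_le₂ (c := cdlb ce G H) (c' := cdlb ce G₁ H)
        (f := ⇑f₁) (Sum.inl ⟨a, ha⟩) (Sum.inl ⟨b, hb⟩) hx01 (ce/2) ?_
      · linarith
      intro x
      rcases x with w | w
      · have hdw := hdeg w.1
        by_cases h1 : (w : ℕ) = a
        · have hx : (Sum.inl w : PadV G H) = Sum.inl ⟨a, ha⟩ := by
            congr 1; exact Subtype.ext h1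
          have hx' : (Sum.inl w : PadV G H) ≠ Sum.inl ⟨b, hb⟩ := by
            intro hcon; injection hcon with hcon
            exact hab (h1 ▸ congrArg Subtype.val hcon)
          rw [if_pos hx, if_neg hx', add_zero]
          rw [if_pos (Sym2.mem_iff.2 (Or.inl h1))] at hdw
          cases hfy : f₁ (Sum.inl w) with
          | inl y =>
            simp only [cdlb, padDeg]
            refine cdlb_abs_le hce _ _ _ ?_
            rw [hdw]; push_cast
            rw [show (((G₁.degree ↑w : ℝ) + 1) - (G₁.degree ↑w : ℝ)) = 1 by ring, abs_one]
          | inr y =>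
            simp only [cdlb, padDeg]
            refine cdlb_abs_le hce _ _ _ ?_
            rw [hdw]; push_cast
            rw [show (((G₁.degree ↑w : ℝ) + 1) - (G₁.degree ↑w : ℝ)) = 1 by ring, abs_one]
        · by_cases h2 : (w : ℕ) = b
          · have hx : (Sum.inl w : PadV G H) = Sum.inl ⟨b, hb⟩ := by
              congr 1; exact Subtype.ext h2
            have hx' : (Sum.inl w : PadV G H) ≠ Sum.inl ⟨a, ha⟩ := by
              intro hcon; injection hcon with hcon
              exact hab (h2 ▸ congrArg Subtype.val hcon).symm
            rw [if_pos hx, if_neg hx', zero_add]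
            rw [if_pos (Sym2.mem_iff.2 (Or.inr h2))] at hdw
            cases hfy : f₁ (Sum.inl w) with
            | inl y =>
              simp only [cdlb, padDeg]
              refine cdlb_abs_le hce _ _ _ ?_
              rw [hdw]; push_cast
              rw [show (((G₁.degree ↑w : ℝ) + 1) - (G₁.degree ↑w : ℝ)) = 1 by ring, abs_one]
            | inr y =>
              simp only [cdlb, padDeg]
              refine cdlb_abs_le hce _ _ _ ?_
              rw [hdw]; push_cast
              rw [show (((G₁.degree ↑w : ℝ) + 1) - (G₁.degree ↑w : ℝ)) = 1 by ring, abs_one]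
          · have hnm : ¬ (w : ℕ) ∈ s(a,b) := by
              rw [Sym2.mem_iff]; push_neg; exact ⟨h1, h2⟩
            rw [if_neg hnm, add_zero] at hdw
            have heq : cdlb ce G H (Sum.inl w) (f₁ (Sum.inl w))
                = cdlb ce G₁ H (Sum.inl w) (f₁ (Sum.inl w)) := by
              cases hfy : f₁ (Sum.inl w) with
              | inl y => simp only [cdlb, padDeg, hdw]
              | inr y => simp only [cdlb, padDeg, hdw]
            rw [heq]; split_ifs <;> linarith
      · have heq : cdlb ce G H (Sum.inr w) (f₁ (Sum.inr w))
            = cdlb ce G₁ H (Sum.inr w) (f₁ (Sum.inr w)) := by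
          cases hfy : f₁ (Sum.inr w) with
          | inl y => rfl
          | inr y => rfl
        rw [heq]; split_ifs <;> linarith
    simp only [CLB, opCost]
    linarith
  | addV v l =>
    simp only [LGraph.apply] at h
    split_ifs at h with hcond
    injection h with h; subst h
    set G₁ : LGraph Lv Le := ⟨insert v G.verts, G.edges, Function.update G.vl v l, G.el⟩ with hG₁
    have hvmem : v ∈ G₁.verts := Finset.mem_insert_self v G.verts
    have hmem : ∀ x, x ∈ G.verts ↔ x ∈ G₁.verts ∧ x ≠ v := by
      intro x
      constructor
      · intro hx
        exact ⟨Finset.mem_insert_of_mem hx, fun hc => hcond (hc ▸ hx)⟩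
      · rintro ⟨hx, hne⟩
        rcases Finset.mem_insert.1 hx with rfl | hx
        · exact absurd rfl hne
        · exact hx
    have hcoe : ∀ z : {x // x ∈ G.verts},
        (((vertEquivOption hvmem hmem).symm (some z) : {x // x ∈ G₁.verts}) : ℕ) = z.1 :=
      fun z => rfl
    have hvl : ∀ z : {x // x ∈ G.verts}, G₁.vl z.1 = G.vl z.1 := by
      intro z
      have hz : z.1 ≠ v := fun hc => hcond (hc ▸ z.2)
      show Function.update G.vl v l z.1 = G.vl z.1
      exact Function.update_of_ne hz l G.vl
    have hdeg : ∀ z : {x // x ∈ G.verts}, G₁.degree z.1 = G.degree z.1 := fun z => rfl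
    have hdeg0 : G₁.degree v = 0 :=
      degree_eq_zero (fun e he hv => hcond (hG.2 e he v hv))
    have ha0 : (optSumCongrL (B := {x // x ∈ H.verts}) (vertEquivOption hvmem hmem)).symm none
        = (Sum.inl ⟨v, hvmem⟩ : PadV G₁ H) := rfl
    have hb0 : (optSumCongrR (B := {x // x ∈ H.verts}) (vertEquivOption hvmem hmem)).symm none
        = (Sum.inr ⟨v, hvmem⟩ : PadV H G₁) := rfl
    have hL : LLB cv cvl G H ≤ cv + LLB cv cvl G₁ H := by
      refine oaCost_le_add cv (cllb_nonneg hcv hcvl G H) ?_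
      intro f₁
      refine exists_restrict_le (optSumCongrL (vertEquivOption hvmem hmem))
        (optSumCongrR (vertEquivOption hvmem hmem)) (cllb cv cvl G₁ H)
        (cllb cv cvl G H) (cllb_compat (vertEquivOption hvmem hmem) hcoe hvl) f₁ cv ?_
      rw [ha0, hb0]
      have hcb : cllb cv cvl G₁ H (Sum.inl ⟨v, hvmem⟩) (Sum.inr ⟨v, hvmem⟩) = cv := rfl
      rw [hcb]
      by_cases hA : f₁ (Sum.inl ⟨v, hvmem⟩) = (Sum.inr ⟨v, hvmem⟩ : PadV H G₁)
      · exact ⟨f₁, hA, by linarith⟩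
      · have hsum := sum_trans_swap (cllb cv cvl G₁ H) f₁ (Sum.inl ⟨v, hvmem⟩)
          (Sum.inr ⟨v, hvmem⟩) hA
        have hga : (f₁.trans (Equiv.swap (f₁ (Sum.inl ⟨v, hvmem⟩)) (Sum.inr ⟨v, hvmem⟩)))
            (Sum.inl ⟨v, hvmem⟩) = (Sum.inr ⟨v, hvmem⟩ : PadV H G₁) := by
          simp [Equiv.trans_apply, Equiv.swap_apply_left]
        cases hr : f₁ (Sum.inl ⟨v, hvmem⟩) with
        | inr d =>
          refine ⟨f₁.trans (Equiv.swap (f₁ (Sum.inl ⟨v, hvmem⟩)) (Sum.inr ⟨v, hvmem⟩)), hga, ?_⟩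
          rw [hsum, hcb]
          have h1 : cllb cv cvl G₁ H (Sum.inl ⟨v, hvmem⟩) (f₁ (Sum.inl ⟨v, hvmem⟩)) = cv := by
            rw [hr]; rfl
          have h2 : cllb cv cvl G₁ H (f₁.symm (Sum.inr ⟨v, hvmem⟩)) (f₁ (Sum.inl ⟨v, hvmem⟩))
              = cllb cv cvl G₁ H (f₁.symm (Sum.inr ⟨v, hvmem⟩)) (Sum.inr ⟨v, hvmem⟩) := by
            rw [hr]
            cases hl : f₁.symm (Sum.inr ⟨v, hvmem⟩) with
            | inl uu => rfl
            | inr uu => rfl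
          rw [h1, h2]
          linarith
        | inl y =>
          cases hl : f₁.symm (Sum.inr ⟨v, hvmem⟩) with
          | inr uu =>
            refine ⟨f₁.trans (Equiv.swap (f₁ (Sum.inl ⟨v, hvmem⟩)) (Sum.inr ⟨v, hvmem⟩)), hga, ?_⟩
            rw [hsum, hcb]
            have h1 : cllb cv cvl G₁ H (f₁.symm (Sum.inr ⟨v, hvmem⟩)) (Sum.inr ⟨v, hvmem⟩) = 0 := by
              rw [hl]; rfl
            have h2 : cllb cv cvl G₁ H (f₁.symm (Sum.inr ⟨v, hvmem⟩)) (f₁ (Sum.inl ⟨v, hvmem⟩))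
                = cv := by rw [hl, hr]; rfl
            have h3 : 0 ≤ cllb cv cvl G₁ H (Sum.inl ⟨v, hvmem⟩) (f₁ (Sum.inl ⟨v, hvmem⟩)) :=
              cllb_nonneg hcv hcvl _ _ _ _
            rw [h1, h2]
            linarith
          | inl uu =>
            obtain ⟨d, bH, hdb⟩ := exists_dummy_pair f₁ hr
            have h2 : f₁ (Sum.inl ⟨v, hvmem⟩) ≠ Sum.inr d := by rw [hr]; simp
            have hqr : (Sum.inr ⟨v, hvmem⟩ : PadV H G₁) ≠ Sum.inr d := by
              intro hcon
              rw [hcon] at hl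
              exact nomatch (hl.symm.trans hdb)
            have hsum2 := sum_trans_cycle (cllb cv cvl G₁ H) f₁ (Sum.inl ⟨v, hvmem⟩)
              (Sum.inr ⟨v, hvmem⟩) (Sum.inr d) hA h2 hqr
            have hga2 : (f₁.trans ((Equiv.swap (f₁ (Sum.inl ⟨v, hvmem⟩)) (Sum.inr d)).trans
                (Equiv.swap (Sum.inr d) (Sum.inr ⟨v, hvmem⟩))))
                (Sum.inl ⟨v, hvmem⟩) = (Sum.inr ⟨v, hvmem⟩ : PadV H G₁) := by
              simp only [Equiv.trans_apply, Equiv.swap_apply_left]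
            refine ⟨_, hga2, ?_⟩
            rw [hsum2, hcb]
            have e1 : 0 ≤ cllb cv cvl G₁ H (Sum.inl ⟨v, hvmem⟩) (f₁ (Sum.inl ⟨v, hvmem⟩)) :=
              cllb_nonneg hcv hcvl _ _ _ _
            have e2 : cllb cv cvl G₁ H (f₁.symm (Sum.inr ⟨v, hvmem⟩)) (Sum.inr ⟨v, hvmem⟩)
                = cv := by rw [hl]; rfl
            have e3 : cllb cv cvl G₁ H (f₁.symm (Sum.inr d)) (Sum.inr d) = 0 := by
              rw [hdb]; rfl
            have e4 : cllb cv cvl G₁ H (f₁.symm (Sum.inr ⟨v, hvmem⟩)) (Sum.inr d) = cv := by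
              rw [hl]; rfl
            have e5 : cllb cv cvl G₁ H (f₁.symm (Sum.inr d)) (f₁ (Sum.inl ⟨v, hvmem⟩)) = cv := by
              rw [hdb, hr]; rfl
            rw [e2, e3, e4, e5]
            linarith
    have hD : DLB ce G H ≤ 0 + DLB ce G₁ H := by
      refine oaCost_le_add 0 (cdlb_nonneg hce G H) ?_
      intro f₁
      refine exists_restrict_le (optSumCongrL (vertEquivOption hvmem hmem))
        (optSumCongrR (vertEquivOption hvmem hmem)) (cdlb ce G₁ H)
        (cdlb ce G H) (cdlb_compat (vertEquivOption hvmem hmem) hcoe hdeg) f₁ 0 ?_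
      rw [ha0, hb0]
      have hcb : cdlb ce G₁ H (Sum.inl ⟨v, hvmem⟩) (Sum.inr ⟨v, hvmem⟩) = 0 := by
        simp [cdlb, padDeg, hdeg0]
      rw [hcb]
      by_cases hA : f₁ (Sum.inl ⟨v, hvmem⟩) = (Sum.inr ⟨v, hvmem⟩ : PadV H G₁)
      · exact ⟨f₁, hA, by simp⟩
      · have hsum := sum_trans_swap (cdlb ce G₁ H) f₁ (Sum.inl ⟨v, hvmem⟩)
          (Sum.inr ⟨v, hvmem⟩) hA
        have hga : (f₁.trans (Equiv.swap (f₁ (Sum.inl ⟨v, hvmem⟩)) (Sum.inr ⟨v, hvmem⟩)))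
            (Sum.inl ⟨v, hvmem⟩) = (Sum.inr ⟨v, hvmem⟩ : PadV H G₁) := by
          simp [Equiv.trans_apply, Equiv.swap_apply_left]
        refine ⟨_, hga, ?_⟩
        rw [hsum, hcb]
        have e1 : cdlb ce G₁ H (Sum.inl ⟨v, hvmem⟩) (f₁ (Sum.inl ⟨v, hvmem⟩))
            = ce / 2 * ((padDeg H G₁ (f₁ (Sum.inl ⟨v, hvmem⟩)) : ℕ) : ℝ) := by
          simp only [cdlb, padDeg, hdeg0]
          rw [Nat.cast_zero, zero_sub, abs_neg, abs_of_nonneg (Nat.cast_nonneg _)]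
        have e2 : cdlb ce G₁ H (f₁.symm (Sum.inr ⟨v, hvmem⟩)) (Sum.inr ⟨v, hvmem⟩)
            = ce / 2 * ((padDeg G₁ H (f₁.symm (Sum.inr ⟨v, hvmem⟩)) : ℕ) : ℝ) := by
          simp only [cdlb, padDeg]
          rw [Nat.cast_zero, sub_zero, abs_of_nonneg (Nat.cast_nonneg _)]
        have e3 : cdlb ce G₁ H (f₁.symm (Sum.inr ⟨v, hvmem⟩)) (f₁ (Sum.inl ⟨v, hvmem⟩))
            ≤ ce / 2 * ((padDeg G₁ H (f₁.symm (Sum.inr ⟨v, hvmem⟩)) : ℕ) : ℝ)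
              + ce / 2 * ((padDeg H G₁ (f₁ (Sum.inl ⟨v, hvmem⟩)) : ℕ) : ℝ) := by
          simp only [cdlb]
          rw [← mul_add]
          refine mul_le_mul_of_nonneg_left ?_ (by linarith)
          rw [abs_sub_le_iff]
          constructor <;> linarith [Nat.cast_nonneg (α := ℝ) (padDeg G₁ H (f₁.symm (Sum.inr ⟨v, hvmem⟩))),
            Nat.cast_nonneg (α := ℝ) (padDeg H G₁ (f₁ (Sum.inl ⟨v, hvmem⟩)))]
        rw [e1, e2]
        linarith
    simp only [CLB, opCost]
    linarith
  | delV v =>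
    simp only [LGraph.apply] at h
    split_ifs at h with hcond
    injection h with h; subst h
    obtain ⟨hvmem, hviso⟩ := hcond
    set G₁ : LGraph Lv Le := ⟨G.verts.erase v, G.edges, G.vl, G.el⟩ with hG₁
    have hmem : ∀ x, x ∈ G₁.verts ↔ x ∈ G.verts ∧ x ≠ v := by
      intro x
      show x ∈ G.verts.erase v ↔ _
      rw [Finset.mem_erase, and_comm]
    have hcoe : ∀ z : {x // x ∈ G₁.verts},
        (((vertEquivOption hvmem hmem).symm (some z) : {x // x ∈ G.verts}) : ℕ) = z.1 :=
      fun z => rfl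
    have hvl : ∀ z : {x // x ∈ G₁.verts}, G.vl z.1 = G₁.vl z.1 := fun z => rfl
    have hdeg : ∀ z : {x // x ∈ G₁.verts}, G.degree z.1 = G₁.degree z.1 := fun z => rfl
    have hdeg0 : G.degree v = 0 := degree_eq_zero hviso
    have ha0 : (optSumCongrL (B := {x // x ∈ H.verts}) (vertEquivOption hvmem hmem)).symm none
        = (Sum.inl ⟨v, hvmem⟩ : PadV G H) := rfl
    have hb0 : (optSumCongrR (B := {x // x ∈ H.verts}) (vertEquivOption hvmem hmem)).symm none
        = (Sum.inr ⟨v, hvmem⟩ : PadV H G) := rfl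
    have hL : LLB cv cvl G H ≤ cv + LLB cv cvl G₁ H := by
      refine oaCost_le_add cv (cllb_nonneg hcv hcvl G H) ?_
      intro f₁
      refine ⟨(optSumCongrL (vertEquivOption hvmem hmem)).trans (f₁.optionCongr.trans
        (optSumCongrR (B := {x // x ∈ H.verts}) (vertEquivOption hvmem hmem)).symm), ?_⟩
      rw [extend_cost (optSumCongrL (vertEquivOption hvmem hmem))
        (optSumCongrR (vertEquivOption hvmem hmem)) (cllb cv cvl G H) (cllb cv cvl G₁ H)
        (cllb_compat (vertEquivOption hvmem hmem) hcoe hvl) f₁]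
      rw [ha0, hb0]
      have hcb : cllb cv cvl G H (Sum.inl ⟨v, hvmem⟩) (Sum.inr ⟨v, hvmem⟩) = cv := rfl
      rw [hcb]
    have hD : DLB ce G H ≤ 0 + DLB ce G₁ H := by
      refine oaCost_le_add 0 (cdlb_nonneg hce G H) ?_
      intro f₁
      refine ⟨(optSumCongrL (vertEquivOption hvmem hmem)).trans (f₁.optionCongr.trans
        (optSumCongrR (B := {x // x ∈ H.verts}) (vertEquivOption hvmem hmem)).symm), ?_⟩
      rw [extend_cost (optSumCongrL (vertEquivOption hvmem hmem))
        (optSumCongrR (vertEquivOption hvmem hmem)) (cdlb ce G H) (cdlb ce G₁ H)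
        (cdlb_compat (vertEquivOption hvmem hmem) hcoe hdeg) f₁]
      rw [ha0, hb0]
      have hcb : cdlb ce G H (Sum.inl ⟨v, hvmem⟩) (Sum.inr ⟨v, hvmem⟩) = 0 := by
        simp [cdlb, padDeg, hdeg0]
      rw [hcb]
    simp only [CLB, opCost]
    linarith

/-! ### The path bound -/

lemma clb_path (cv cvl ce cel : ℝ) (hcv : 0 ≤ cv) (hcvl : 0 ≤ cvl) (hce : 0 ≤ ce)
    (hcel : 0 ≤ cel) (H : LGraph Lv Le) :
    ∀ (ops : List (Op Lv Le)) (G H' : LGraph Lv Le), G.WF →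
      LGraph.applyList ops G = some H' →
      CLB cv cvl ce G H ≤ (ops.map (opCost cv cvl ce cel)).sum + CLB cv cvl ce H' H := by
  intro ops
  induction ops with
  | nil =>
    intro G H' hG h
    injection h with h; subst h
    simp
  | cons o ops ih =>
    intro G H' hG h
    simp only [LGraph.applyList] at h
    cases happ : LGraph.apply o G with
    | none => rw [happ] at h; exact absurd h (by simp)
    | some G₁ =>
      rw [happ] at h
      have h1 := clb_step cv cvl ce cel hcv hcvl hce hcel H hG happ
      have h2 := ih G₁ H' (hG.apply happ) h
      simp only [List.map_cons, List.sum_cons]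
      linarith

/-! ### Isomorphic graphs have zero CLB -/

lemma degree_iso {H' H : LGraph Lv Le} (hH' : H'.WF) (hH : H.WF) {f : ℕ → ℕ}
    (hbij : Set.BijOn f ↑H'.verts ↑H.verts)
    (hadj : ∀ u ∈ H'.verts, ∀ w ∈ H'.verts, (s(u,w) ∈ H'.edges ↔ s(f u, f w) ∈ H.edges))
    {u : ℕ} (hu : u ∈ H'.verts) : H'.degree u = H.degree (f u) := by
  unfold degree
  refine Finset.card_bij (fun e _ => Sym2.map f e) ?_ ?_ ?_
  · intro e he
    rw [Finset.mem_filter] at he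
    rw [Finset.mem_filter]
    obtain ⟨he1, he2⟩ := he
    revert he1 he2
    induction e using Sym2.ind with
    | _ a b =>
    intro he1 he2
    have haa : a ∈ H'.verts := hH'.2 _ he1 a (Sym2.mem_iff.2 (Or.inl rfl))
    have hbb : b ∈ H'.verts := hH'.2 _ he1 b (Sym2.mem_iff.2 (Or.inr rfl))
    constructor
    · rw [Sym2.map_pair_eq]
      exact (hadj a haa b hbb).1 he1
    · rw [Sym2.map_pair_eq]
      rcases Sym2.mem_iff.1 he2 with rfl | rfl
      · exact Sym2.mem_iff.2 (Or.inl rfl)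
      · exact Sym2.mem_iff.2 (Or.inr rfl)
  · intro e1 he1 e2 he2 heq
    rw [Finset.mem_filter] at he1 he2
    revert he1 he2 heq
    induction e1 using Sym2.ind with
    | _ a b =>
    induction e2 using Sym2.ind with
    | _ c d =>
    intro he1 he2 heq
    have haa : a ∈ H'.verts := hH'.2 _ he1.1 a (Sym2.mem_iff.2 (Or.inl rfl))
    have hbb : b ∈ H'.verts := hH'.2 _ he1.1 b (Sym2.mem_iff.2 (Or.inr rfl))
    have hcc : c ∈ H'.verts := hH'.2 _ he2.1 c (Sym2.mem_iff.2 (Or.inl rfl))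
    have hdd : d ∈ H'.verts := hH'.2 _ he2.1 d (Sym2.mem_iff.2 (Or.inr rfl))
    rw [Sym2.map_pair_eq, Sym2.map_pair_eq, Sym2.eq_iff] at heq
    rw [Sym2.eq_iff]
    rcases heq with ⟨h1, h2⟩ | ⟨h1, h2⟩
    · exact Or.inl ⟨hbij.injOn haa hcc h1, hbij.injOn hbb hdd h2⟩
    · exact Or.inr ⟨hbij.injOn haa hdd h1, hbij.injOn hbb hcc h2⟩
  · intro e' he'
    rw [Finset.mem_filter] at he'
    revert he'
    induction e' using Sym2.ind with
    | _ x y =>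
    intro he'
    have hx : x ∈ H.verts := hH.2 _ he'.1 x (Sym2.mem_iff.2 (Or.inl rfl))
    have hy : y ∈ H.verts := hH.2 _ he'.1 y (Sym2.mem_iff.2 (Or.inr rfl))
    obtain ⟨a, haa, rfl⟩ := hbij.surjOn hx
    obtain ⟨b, hbb, rfl⟩ := hbij.surjOn hy
    have hedge : s(a,b) ∈ H'.edges := (hadj a haa b hbb).2 he'.1
    refine ⟨s(a,b), ?_, ?_⟩
    · rw [Finset.mem_filter]
      refine ⟨hedge, ?_⟩
      rcases Sym2.mem_iff.1 he'.2 with hfu | hfu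
      · exact Sym2.mem_iff.2 (Or.inl (hbij.injOn hu haa hfu))
      · exact Sym2.mem_iff.2 (Or.inr (hbij.injOn hu hbb hfu))
    · rw [Sym2.map_pair_eq]

lemma clb_iso (cv cvl ce : ℝ) (hcv : 0 ≤ cv) (hcvl : 0 ≤ cvl) (hce : 0 ≤ ce)
    {H' H : LGraph Lv Le} (hH' : H'.WF) (hH : H.WF) (hiso : Iso H' H) :
    CLB cv cvl ce H' H ≤ 0 := by
  obtain ⟨f, hbij, hvl, hadj, hel⟩ := hiso
  have hbj : Function.Bijective
      (fun u : {x // x ∈ H'.verts} => (⟨f u.1, hbij.mapsTo u.2⟩ : {x // x ∈ H.verts})) := by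
    constructor
    · intro u w huw
      have hfc : f u.1 = f w.1 := congrArg Subtype.val huw
      exact Subtype.ext (hbij.injOn u.2 w.2 hfc)
    · intro w
      obtain ⟨a, ha, hfa⟩ := hbij.surjOn w.2
      exact ⟨⟨a, ha⟩, Subtype.ext hfa⟩
  set e := Equiv.ofBijective _ hbj with he
  have hecoe : ∀ u, ((e u : {x // x ∈ H.verts}) : ℕ) = f u.1 := fun u => rfl
  have hLs : ∑ x, cllb cv cvl H' H x ((Equiv.sumCongr e e.symm) x) = 0 := by
    refine Finset.sum_eq_zero fun x _ => ?_
    rcases x with u | u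
    · show cllb cv cvl H' H (Sum.inl u) (Sum.inl (e u)) = 0
      simp only [cllb]
      rw [if_pos]
      rw [hecoe u]
      exact (hvl u.1 u.2).symm
    · show cllb cv cvl H' H (Sum.inr u) (Sum.inr (e.symm u)) = 0
      rfl
  have hDs : ∑ x, cdlb ce H' H x ((Equiv.sumCongr e e.symm) x) = 0 := by
    refine Finset.sum_eq_zero fun x _ => ?_
    rcases x with u | u
    · show cdlb ce H' H (Sum.inl u) (Sum.inl (e u)) = 0
      simp only [cdlb, padDeg]
      rw [hecoe u, ← degree_iso hH' hH hbij hadj u.2]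
      simp
    · show cdlb ce H' H (Sum.inr u) (Sum.inr (e.symm u)) = 0
      simp [cdlb, padDeg]
  have h1 : LLB cv cvl H' H ≤ 0 :=
    le_of_le_of_eq (oaCost_le (cllb_nonneg hcv hcvl H' H) _) hLs
  have h2 : DLB ce H' H ≤ 0 :=
    le_of_le_of_eq (oaCost_le (cdlb_nonneg hce H' H) _) hDs
  simp only [CLB]
  linarith

/-! ### Existence of an edit path -/

lemma exists_ops_clear_edges : ∀ (n : ℕ) (G : LGraph Lv Le), G.edges.card = n →
    ∃ ops : List (Op Lv Le), LGraph.applyList ops G = some ⟨G.verts, ∅, G.vl, G.el⟩ := by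
  intro n
  induction n with
  | zero =>
    intro G hcard
    have hemp : G.edges = ∅ := Finset.card_eq_zero.mp hcard
    refine ⟨[], ?_⟩
    show some G = some ⟨G.verts, ∅, G.vl, G.el⟩
    rw [← hemp]
  | succ n ih =>
    intro G hcard
    obtain ⟨e, he⟩ := Finset.card_pos.mp (by omega : 0 < G.edges.card)
    obtain ⟨ops, hops⟩ := ih ⟨G.verts, G.edges.erase e, G.vl, G.el⟩
      (by simp [Finset.card_erase_of_mem he, hcard])
    refine ⟨Op.delE e :: ops, ?_⟩
    show (LGraph.apply (Op.delE e) G).bind _ = _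
    simp only [LGraph.apply]
    rw [if_pos he, Option.bind_some]
    exact hops

lemma exists_ops_clear_verts : ∀ (n : ℕ) (G : LGraph Lv Le), G.verts.card = n → G.edges = ∅ →
    ∃ ops : List (Op Lv Le), LGraph.applyList ops G = some ⟨∅, ∅, G.vl, G.el⟩ := by
  intro n
  induction n with
  | zero =>
    intro G hcard hemp
    have hv : G.verts = ∅ := Finset.card_eq_zero.mp hcard
    refine ⟨[], ?_⟩
    show some G = some ⟨∅, ∅, G.vl, G.el⟩
    rw [← hv, ← hemp]
  | succ n ih =>
    intro G hcard hemp
    obtain ⟨v, hv⟩ := Finset.card_pos.mp (by omega : 0 < G.verts.card)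
    obtain ⟨ops, hops⟩ := ih ⟨G.verts.erase v, G.edges, G.vl, G.el⟩
      (by simp [Finset.card_erase_of_mem hv, hcard]) hemp
    refine ⟨Op.delV v :: ops, ?_⟩
    show (LGraph.apply (Op.delV v) G).bind _ = _
    simp only [LGraph.apply]
    rw [if_pos ⟨hv, by simp [hemp]⟩, Option.bind_some]
    exact hops

lemma exists_ops_add_verts (lab : ℕ → Lv) (S : Finset ℕ) :
    ∀ (G : LGraph Lv Le), Disjoint S G.verts →
    ∃ (ops : List (Op Lv Le)) (vl' : ℕ → Lv),
      LGraph.applyList ops G = some ⟨S ∪ G.verts, G.edges, vl', G.el⟩ ∧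
      (∀ w ∈ S, vl' w = lab w) ∧ (∀ w ∉ S, vl' w = G.vl w) := by
  induction S using Finset.induction_on with
  | empty =>
    intro G _
    refine ⟨[], G.vl, ?_, by simp, fun w _ => rfl⟩
    show some G = _
    rw [Finset.empty_union]
  | @insert a S ha ih =>
    intro G hdisj
    have haG : a ∉ G.verts :=
      fun hc => Finset.disjoint_left.mp hdisj (Finset.mem_insert_self a S) hc
    obtain ⟨ops, vl', hops, hlab, hout⟩ :=
      ih (G := ⟨insert a G.verts, G.edges, Function.update G.vl a (lab a), G.el⟩)
      (by
        rw [Finset.disjoint_left]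
        intro x hxS hxmem
        rcases Finset.mem_insert.1 hxmem with rfl | hxG
        · exact ha hxS
        · exact Finset.disjoint_left.mp hdisj (Finset.mem_insert_of_mem hxS) hxG)
    refine ⟨Op.addV a (lab a) :: ops, vl', ?_, ?_, ?_⟩
    · show (LGraph.apply (Op.addV a (lab a)) G).bind _ = _
      simp only [LGraph.apply]
      rw [if_neg haG, Option.bind_some, hops, Finset.union_insert, Finset.insert_union]
    · intro w hw
      rcases Finset.mem_insert.1 hw with hweq | hwS
      · rw [hweq, hout a ha]
        show Function.update G.vl a (lab a) a = lab a
        simp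
      · exact hlab w hwS
    · intro w hw
      have hwa : w ≠ a := fun hc => hw (hc ▸ Finset.mem_insert_self a S)
      have hwS : w ∉ S := fun hc => hw (Finset.mem_insert_of_mem hc)
      rw [hout w hwS]
      show Function.update G.vl a (lab a) w = G.vl w
      exact Function.update_of_ne hwa _ _

lemma exists_ops_add_edges (H : LGraph Lv Le) (hH : H.WF) (T : Finset (Sym2 ℕ)) :
    ∀ (G : LGraph Lv Le), T ⊆ H.edges → G.verts = H.verts → Disjoint T G.edges →
    ∃ (ops : List (Op Lv Le)) (el' : Sym2 ℕ → Le),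
      LGraph.applyList ops G = some ⟨G.verts, T ∪ G.edges, G.vl, el'⟩ ∧
      (∀ e ∈ T, el' e = H.el e) ∧ (∀ e ∉ T, el' e = G.el e) := by
  induction T using Finset.induction_on with
  | empty =>
    intro G _ _ _
    refine ⟨[], G.el, ?_, by simp, fun e _ => rfl⟩
    show some G = _
    rw [Finset.empty_union]
  | @insert e T he ih =>
    intro G
    revert he ih
    induction e using Sym2.ind with
    | _ a b =>
    intro he ih hsub hverts hdisj
    have heH : s(a,b) ∈ H.edges := hsub (Finset.mem_insert_self _ _)
    have hab : a ≠ b := fun hc => (hH.1 _ heH) (Sym2.mk_isDiag_iff.2 hc)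
    have haH : a ∈ G.verts := by
      rw [hverts]; exact hH.2 _ heH a (Sym2.mem_iff.2 (Or.inl rfl))
    have hbH : b ∈ G.verts := by
      rw [hverts]; exact hH.2 _ heH b (Sym2.mem_iff.2 (Or.inr rfl))
    have henotin : s(a,b) ∉ G.edges :=
      Finset.disjoint_left.mp hdisj (Finset.mem_insert_self _ _)
    obtain ⟨ops, el', hops, hlab, hout⟩ := ih
      (G := ⟨G.verts, insert s(a,b) G.edges, G.vl, Function.update G.el s(a,b) (H.el s(a,b))⟩)
      (fun x hx => hsub (Finset.mem_insert_of_mem hx))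
      hverts
      (by
        rw [Finset.disjoint_left]
        intro x hxT hxmem
        rcases Finset.mem_insert.1 hxmem with rfl | hxG
        · exact he hxT
        · exact Finset.disjoint_left.mp hdisj (Finset.mem_insert_of_mem hxT) hxG)
    refine ⟨Op.addE a b (H.el s(a,b)) :: ops, el', ?_, ?_, ?_⟩
    · show (LGraph.apply (Op.addE a b (H.el s(a,b))) G).bind _ = _
      simp only [LGraph.apply]
      rw [if_pos ⟨haH, hbH, hab, henotin⟩, Option.bind_some, hops,
        Finset.union_insert, Finset.insert_union]
    · intro x hx
      rcases Finset.mem_insert.1 hx with rfl | hxT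
      · rw [hout s(a,b) he]
        show Function.update G.el s(a,b) (H.el s(a,b)) s(a,b) = H.el s(a,b)
        simp
      · exact hlab x hxT
    · intro x hx
      have hxe : x ≠ s(a,b) := fun hc => hx (hc ▸ Finset.mem_insert_self _ _)
      have hxT : x ∉ T := fun hc => hx (Finset.mem_insert_of_mem hc)
      rw [hout x hxT]
      show Function.update G.el s(a,b) (H.el s(a,b)) x = G.el x
      exact Function.update_of_ne hxe _ _

lemma exists_path (G H : LGraph Lv Le) (hG : G.WF) (hH : H.WF) :
    ∃ (ops : List (Op Lv Le)) (H' : LGraph Lv Le),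
      LGraph.applyList ops G = some H' ∧ Iso H' H := by
  obtain ⟨ops1, h1⟩ := exists_ops_clear_edges G.edges.card G rfl
  obtain ⟨ops2, h2⟩ := exists_ops_clear_verts G.verts.card ⟨G.verts, ∅, G.vl, G.el⟩ rfl rfl
  obtain ⟨ops3, vl', h3, hvl3, -⟩ :=
    exists_ops_add_verts H.vl H.verts (⟨∅, ∅, G.vl, G.el⟩ : LGraph Lv Le) (by simp)
  obtain ⟨ops4, el', h4, hel4, -⟩ := exists_ops_add_edges H hH H.edges
    (⟨H.verts, ∅, vl', G.el⟩ : LGraph Lv Le) (le_refl _) rfl (by simp)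
  dsimp only at h2 h3 h4
  rw [Finset.union_empty] at h3 h4
  refine ⟨ops1 ++ (ops2 ++ (ops3 ++ ops4)), ⟨H.verts, H.edges, vl', el'⟩, ?_, ?_⟩
  · rw [applyList_append, h1, Option.bind_some, applyList_append, h2, Option.bind_some,
      applyList_append, h3, Option.bind_some, h4]
  · refine ⟨id, ?_, ?_, ?_, ?_⟩
    · exact Set.bijOn_id _
    · intro w hw
      exact (hvl3 w hw).symm
    · intro u _ w _
      exact Iff.rfl
    · intro u _ w _ hmem
      exact (hel4 _ hmem).symm

end LGraph

open LGraph in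
/-- For any two labeled graphs `G` and `H`, the combined lower bound
`CLB(G,H) = LLB(G,H) + DLB(G,H)` is at most the graph edit distance `GED(G,H)`. -/
theorem clb_le_ged {Lv Le : Type} (cv cvl ce cel : ℝ)
    (hcv : 0 ≤ cv) (hcvl : 0 ≤ cvl) (hce : 0 ≤ ce) (hcel : 0 ≤ cel)
    (G H : LGraph Lv Le) (hG : G.WF) (hH : H.WF) :
    CLB cv cvl ce G H ≤ GED cv cvl ce cel G H := by
  obtain ⟨ops0, H0, h0, hiso0⟩ := exists_path G H hG hH
  refine le_csInf ⟨_, ops0, H0, h0, hiso0, rfl⟩ ?_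
  rintro r ⟨ops, H', happ, hiso, rfl⟩
  have h1 := clb_path cv cvl ce cel hcv hcvl hce hcel H ops G H' hG happ
  have h2 := clb_iso cv cvl ce hcv hcvl hce (hG.applyList happ) hH hiso
  linarith
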